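/- Let X be a finite index type and let Φ₀, Φ₁ : Matrix X X ℂ →ₗ[ℂ] Matrix (Fin 2) (Fin 2) ℂ be quantum channels with one-qubit output. Then for every finite index type Z, every density operator ρ on X × Z, and every binary separable measurement {P₀, P₁} on (Fin 2) × Z (i.e., P₀ and P₁ are separable positive semidefinite operators with P₀ + P₁ = 1), it holds that ⟨P₀ − P₁, ((Φ₀ − Φ₁) ⊗ id_Z)(ρ)⟩ ≤ c, where c is any real number such that ‖Φ₀(σ) − Φ₁(σ)‖₁ ≤ c for every density operator σ on X. (Consequently ‖Φ₀ − Φ₁‖_SEP = ‖Φ₀ − Φ₁‖_NE when dim Y = 2.) -/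

import Mathlib

open Matrix Kronecker BigOperators ComplexOrder

noncomputable def traceNorm {n : Type*} [Fintype n] [DecidableEq n] (A : Matrix n n ℂ) : ℝ :=
  (((Matrix.posSemidef_conjTranspose_mul_self A).isHermitian.eigenvectorUnitary.1 *
      Matrix.diagonal ((fun x : ℝ => (x : ℂ)) ∘ (√·) ∘ (Matrix.posSemidef_conjTranspose_mul_self A).isHermitian.eigenvalues) *
      (star (Matrix.posSemidef_conjTranspose_mul_self A).isHermitian.eigenvectorUnitary :
        Matrix n n ℂ)).trace).re

def IsDensity {n : Type*} [Fintype n] (ρ : Matrix n n ℂ) : Prop :=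
  ρ.PosSemidef ∧ ρ.trace = 1

def tensorId {X Y Z : Type*} (Φ : Matrix X X ℂ → Matrix Y Y ℂ)
    (ρ : Matrix (X × Z) (X × Z) ℂ) : Matrix (Y × Z) (Y × Z) ℂ :=
  Matrix.of fun p q => Φ (Matrix.of fun x x' => ρ (x, p.2) (x', q.2)) p.1 q.1

noncomputable def ChoiMatrix {X Y : Type*} [Fintype X] [DecidableEq X] [Fintype Y]
    (Φ : Matrix X X ℂ → Matrix Y Y ℂ) : Matrix (Y × X) (Y × X) ℂ :=
  ∑ j : X, ∑ k : X, (Φ (Matrix.single j k 1)) ⊗ₖ (Matrix.single j k 1)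

def IsChannel {X Y : Type*} [Fintype X] [DecidableEq X] [Fintype Y]
    (Φ : Matrix X X ℂ →ₗ[ℂ] Matrix Y Y ℂ) : Prop :=
  (∀ M, (Φ M).trace = M.trace) ∧ (ChoiMatrix (⇑Φ)).PosSemidef

def SeparableOp {Y Z : Type*} [Fintype Y] [Fintype Z]
    (P : Matrix (Y × Z) (Y × Z) ℂ) : Prop :=
  ∃ (N : ℕ) (Q : Fin N → Matrix Y Y ℂ) (R : Fin N → Matrix Z Z ℂ),
    (∀ i, (Q i).PosSemidef) ∧ (∀ i, (R i).PosSemidef) ∧ P = ∑ i, Q i ⊗ₖ R i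

def partialTranspose {Y Z : Type*} (M : Matrix (Y × Z) (Y × Z) ℂ) :
    Matrix (Y × Z) (Y × Z) ℂ :=
  Matrix.of fun p q => M (p.1, q.2) (q.1, p.2)

def IsPPT {Y Z : Type*} [Fintype Y] [Fintype Z] (M : Matrix (Y × Z) (Y × Z) ℂ) : Prop :=
  M.PosSemidef ∧ (partialTranspose M).PosSemidef

/-! ### Auxiliary lemmas -/

section Aux

open Complex

lemma trace_real' {n : Type*} [Fintype n] {A : Matrix n n ℂ} (h : A.IsHermitian) :
    A.trace = (A.trace.re : ℂ) := by
  have h1 : (starRingEnd ℂ) A.trace = A.trace := by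
    have := Matrix.trace_conjTranspose A
    rw [h.eq] at this
    exact this.symm
  exact (Complex.conj_eq_iff_re.mp h1).symm

lemma trace_BHB {n : Type*} [Fintype n] (B : Matrix n n ℂ) :
    (Bᴴ * B).trace = ((∑ j, ∑ t, Complex.normSq (B t j) : ℝ) : ℂ) := by
  rw [Matrix.trace]
  push_cast
  refine Finset.sum_congr rfl fun j _ => ?_
  rw [Matrix.diag_apply, Matrix.mul_apply]
  refine Finset.sum_congr rfl fun t _ => ?_
  rw [Matrix.conjTranspose_apply]
  exact (Complex.normSq_eq_conj_mul_self).symm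

lemma psd_eq_BHB {n : Type*} [Fintype n] {A : Matrix n n ℂ} (h : A.PosSemidef) :
    ∃ B : Matrix n n ℂ, A = Bᴴ * B := by
  classical
  refine ⟨Matrix.diagonal (fun i => ((√(h.1.eigenvalues i) : ℝ) : ℂ)) *
    (star h.1.eigenvectorUnitary : Matrix n n ℂ), ?_⟩
  conv_lhs => rw [h.1.spectral_theorem]
  rw [Matrix.conjTranspose_mul, Matrix.diagonal_conjTranspose]
  simp only [Unitary.conjStarAlgAut_apply, Unitary.coe_star, Matrix.star_eq_conjTranspose,
    Matrix.conjTranspose_conjTranspose]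
  have hd : Matrix.diagonal (RCLike.ofReal ∘ h.1.eigenvalues) =
      Matrix.diagonal (star (fun i => ((√(h.1.eigenvalues i) : ℝ) : ℂ))) *
        Matrix.diagonal (fun i => ((√(h.1.eigenvalues i) : ℝ) : ℂ)) := by
    rw [Matrix.diagonal_mul_diagonal]
    congr 1
    funext i
    simp only [Function.comp_apply, Pi.star_apply, Complex.star_def, Complex.conj_ofReal]
    rw [← Complex.ofReal_mul, Real.mul_self_sqrt (h.eigenvalues_nonneg i)]
    rfl
  rw [hd]
  simp only [Matrix.mul_assoc]

lemma traceNorm_of_eq_smul {n : Type*} [Fintype n] [DecidableEq n] (A : Matrix n n ℂ) (s : ℝ)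
    (h : Aᴴ * A = (s : ℂ) • 1) : traceNorm A = Fintype.card n * √s := by
  have hev : ∀ i, (Matrix.posSemidef_conjTranspose_mul_self A).isHermitian.eigenvalues i = s := by
    intro i
    have h1 := (Matrix.posSemidef_conjTranspose_mul_self A).isHermitian.conjStarAlgAut_star_eigenvectorUnitary
    simp only [Unitary.conjStarAlgAut_apply, h, Matrix.mul_smul, Matrix.smul_mul, Matrix.mul_one,
      star_star, Unitary.coe_star_mul_self] at h1
    have h2 := congrFun (congrFun h1 i) i
    simp at h2
    exact_mod_cast h2.symm
  rw [traceNorm, Matrix.trace_mul_cycle, Unitary.coe_star_mul_self, Matrix.one_mul,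
    Matrix.trace_diagonal]
  simp [hev]

lemma psd_trace_re_nonneg {n : Type*} [Fintype n] [DecidableEq n] {A : Matrix n n ℂ}
    (h : A.PosSemidef) : 0 ≤ A.trace.re := by
  obtain ⟨B, rfl⟩ := psd_eq_BHB h
  rw [trace_BHB]
  simp only [Complex.ofReal_re]
  exact Finset.sum_nonneg fun j _ => Finset.sum_nonneg fun t _ => Complex.normSq_nonneg _

lemma psd_eq_zero_of_trace {n : Type*} [Fintype n] [DecidableEq n] {A : Matrix n n ℂ}
    (h : A.PosSemidef) (h0 : A.trace.re = 0) : A = 0 := by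
  obtain ⟨B, rfl⟩ := psd_eq_BHB h
  rw [trace_BHB, Complex.ofReal_re] at h0
  have hB : ∀ t j, B t j = 0 := by
    intro t j
    have h1 : ∀ j ∈ Finset.univ, (0:ℝ) ≤ ∑ t, Complex.normSq (B t j) :=
      fun j _ => Finset.sum_nonneg fun t _ => Complex.normSq_nonneg _
    have h2 := (Finset.sum_eq_zero_iff_of_nonneg h1).mp h0 j (Finset.mem_univ j)
    have h3 := (Finset.sum_eq_zero_iff_of_nonneg
      (fun t _ => Complex.normSq_nonneg (B t j))).mp h2 t (Finset.mem_univ t)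
    exact Complex.normSq_eq_zero.mp h3
  ext x y
  simp [Matrix.mul_apply, Matrix.conjTranspose_apply, hB]

lemma choi_apply {X Y : Type*} [Fintype X] [DecidableEq X] [Fintype Y]
    (Φ : Matrix X X ℂ → Matrix Y Y ℂ) (y y' : Y) (j k : X) :
    ChoiMatrix Φ (y, j) (y', k) = Φ (Matrix.single j k 1) y y' := by
  simp only [ChoiMatrix, Matrix.sum_apply, Matrix.kroneckerMap_apply,
    Matrix.single, Matrix.of_apply]
  rw [Finset.sum_eq_single j]
  · rw [Finset.sum_eq_single k] <;> simp +contextual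
  · intro b _ hb
    apply Finset.sum_eq_zero
    intro k' _
    simp [hb]
  · simp

lemma map_expand {X Y : Type*} [Fintype X] [DecidableEq X] [Fintype Y]
    (Φ : Matrix X X ℂ →ₗ[ℂ] Matrix Y Y ℂ) (σ : Matrix X X ℂ) :
    Φ σ = ∑ j, ∑ k, σ j k • Φ (Matrix.single j k 1) := by
  conv_lhs => rw [Matrix.matrix_eq_sum_single σ]
  rw [map_sum]
  refine Finset.sum_congr rfl fun j _ => ?_
  rw [map_sum]
  refine Finset.sum_congr rfl fun k _ => ?_
  rw [← _root_.map_smul]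
  congr 1
  rw [Matrix.smul_single]
  simp

lemma conjTranspose_map_choi {X Y : Type*} [Fintype X] [DecidableEq X] [Fintype Y]
    (Φ : Matrix X X ℂ →ₗ[ℂ] Matrix Y Y ℂ) (hΦ : (ChoiMatrix ⇑Φ).IsHermitian)
    (σ : Matrix X X ℂ) : (Φ σ)ᴴ = Φ σᴴ := by
  have key : ∀ (j k : X) (y y' : Y),
      (starRingEnd ℂ) (Φ (Matrix.single j k 1) y' y)
        = Φ (Matrix.single k j 1) y y' := by
    intro j k y y'
    have h1 : (ChoiMatrix ⇑Φ)ᴴ (y, k) (y', j) = ChoiMatrix ⇑Φ (y, k) (y', j) :=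
      congrFun (congrFun hΦ.eq (y, k)) (y', j)
    rw [Matrix.conjTranspose_apply, choi_apply, choi_apply] at h1
    exact h1
  ext y y'
  rw [Matrix.conjTranspose_apply, map_expand Φ σ, map_expand Φ σᴴ]
  simp only [Matrix.sum_apply, Matrix.smul_apply, smul_eq_mul, star_sum, star_mul']
  rw [Finset.sum_comm]
  refine Finset.sum_congr rfl fun k _ => Finset.sum_congr rfl fun j _ => ?_
  rw [Matrix.conjTranspose_apply]
  congr 1
  exact key j k y y'

lemma trace_fin2 (M : Matrix (Fin 2) (Fin 2) ℂ) : M.trace = M 0 0 + M 1 1 := by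
  rw [Matrix.trace]; simp [Fin.sum_univ_two]

lemma herm_facts (H : Matrix (Fin 2) (Fin 2) ℂ) (hH : H.IsHermitian) (h0 : H.trace = 0) :
    H 0 0 = ((H 0 0).re : ℂ) ∧ H 1 1 = -((H 0 0).re : ℂ) ∧ H 1 0 = (starRingEnd ℂ) (H 0 1) := by
  have h00 : H 0 0 = ((H 0 0).re : ℂ) := (hH.coe_re_apply_self 0).symm
  have htr : H 0 0 + H 1 1 = 0 := by
    rw [← trace_fin2, h0]
  exact ⟨h00, by rw [← h00]; linear_combination htr, (hH.apply 1 0).symm⟩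

lemma traceNorm_qubit (H : Matrix (Fin 2) (Fin 2) ℂ) (hH : H.IsHermitian) (h0 : H.trace = 0) :
    traceNorm H = 2 * Real.sqrt ((H 0 0).re ^ 2 + Complex.normSq (H 0 1)) := by
  obtain ⟨h00, h11, h10⟩ := herm_facts H hH h0
  set a : ℝ := (H 0 0).re with ha
  set s : ℝ := a ^ 2 + Complex.normSq (H 0 1) with hs
  have hs0 : 0 ≤ s := add_nonneg (sq_nonneg _) (Complex.normSq_nonneg _)
  set r : ℝ := Real.sqrt s with hr
  have hr0 : 0 ≤ r := Real.sqrt_nonneg _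
  have hrsq : (r : ℝ) ^ 2 = s := Real.sq_sqrt hs0
  have hdiag : ((r : ℂ) • (1 : Matrix (Fin 2) (Fin 2) ℂ))
      = Matrix.diagonal (fun _ => (r : ℂ)) := by
    ext i j
    by_cases h : i = j <;> simp [Matrix.one_apply, Matrix.diagonal, h]
  have hPSD : ((r : ℂ) • (1 : Matrix (Fin 2) (Fin 2) ℂ)).PosSemidef := by
    rw [hdiag]
    exact Matrix.posSemidef_diagonal_iff.mpr fun i => Complex.zero_le_real.mpr hr0
  have hHH : H * H = ((s : ℝ) : ℂ) • 1 := by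
    ext i j
    fin_cases i <;> fin_cases j <;>
      simp only [Matrix.mul_apply, Fin.sum_univ_two, Matrix.smul_apply, Matrix.one_apply,
        smul_eq_mul, if_true, if_false, Fin.zero_eta, Fin.mk_one, mul_one, mul_zero,
        one_ne_zero, zero_ne_one, reduceIte]
    · rw [h00, h10, Complex.mul_conj]
      push_cast [hs]
      ring
    · rw [h00, h11]; ring
    · rw [h10, h00, h11]; ring
    · rw [h10, h11, mul_comm ((starRingEnd ℂ) (H 0 1)) (H 0 1), Complex.mul_conj]
      push_cast [hs]
      ring
  have hsq : ((r : ℂ) • (1 : Matrix (Fin 2) (Fin 2) ℂ)) ^ 2 = Hᴴ * H := by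
    rw [hH.eq, hHH, smul_pow, one_pow, ← hrsq]
    push_cast
    ring_nf
  rw [traceNorm_of_eq_smul H s (by rw [hH.eq, hHH]), Fintype.card_fin, hr]
  push_cast
  ring

lemma cs_ineq (a n m q1 q2 sR r : ℝ) (hq1 : 0 ≤ q1) (hq2 : 0 ≤ q2)
    (hmq : m ^ 2 ≤ q1 * q2) (hr0 : 0 ≤ r) (hr : r ^ 2 = a ^ 2 + n ^ 2) (hs : sR ≤ m * n) :
    a * q1 - a * q2 + 2 * sR ≤ (q1 + q2) * r := by
  have e1 : 0 ≤ (a ^ 2 + n ^ 2) * (q1 * q2 - m ^ 2) :=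
    mul_nonneg (by positivity) (by linarith)
  have hrr : (r * (q1 + q2)) ^ 2 = (a ^ 2 + n ^ 2) * (q1 + q2) ^ 2 := by
    rw [mul_pow, hr]
  have h1 : (a * (q1 - q2) + 2 * m * n) ^ 2 ≤ (r * (q1 + q2)) ^ 2 := by
    rw [hrr]
    nlinarith [sq_nonneg (n * (q1 - q2) - 2 * m * a), e1]
  have h2 : a * (q1 - q2) + 2 * m * n ≤ r * (q1 + q2) := by
    nlinarith [mul_nonneg hr0 (add_nonneg hq1 hq2)]
  linarith

lemma core_bound (Q H : Matrix (Fin 2) (Fin 2) ℂ)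
    (hQh : Q.IsHermitian) (h00 : 0 ≤ (Q 0 0).re) (h11 : 0 ≤ (Q 1 1).re)
    (hdet : Complex.normSq (Q 0 1) ≤ (Q 0 0).re * (Q 1 1).re)
    (hH : H.IsHermitian) (h0 : H.trace = 0) :
    ((Qᴴ * H).trace).re ≤ (Q.trace).re / 2 * traceNorm H := by
  have hQ00 : Q 0 0 = ((Q 0 0).re : ℂ) := (hQh.coe_re_apply_self 0).symm
  have hQ11 : Q 1 1 = ((Q 1 1).re : ℂ) := (hQh.coe_re_apply_self 1).symm
  have hQ10 : Q 1 0 = (starRingEnd ℂ) (Q 0 1) := (hQh.apply 1 0).symm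
  obtain ⟨hH00, hH11, hH10⟩ := herm_facts H hH h0
  have htrQ : (Q.trace).re = (Q 0 0).re + (Q 1 1).re := by
    rw [Matrix.trace]; simp [Fin.sum_univ_two]
  have hexp : ((Qᴴ * H).trace).re
      = (H 0 0).re * (Q 0 0).re - (H 0 0).re * (Q 1 1).re
        + 2 * (Q 0 1 * (starRingEnd ℂ) (H 0 1)).re := by
    rw [hQh.eq, Matrix.trace]
    simp only [Fin.sum_univ_two, Matrix.diag_apply, Matrix.mul_apply]
    rw [hQ00, hQ11, hQ10, hH00, hH11, hH10]
    simp [Complex.add_re, Complex.mul_re, Complex.conj_re, Complex.conj_im,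
      Complex.ofReal_re, Complex.ofReal_im]
    ring
  rw [hexp, htrQ, traceNorm_qubit H hH h0]
  have key := cs_ineq (H 0 0).re (‖H 0 1‖) (‖Q 0 1‖)
    (Q 0 0).re (Q 1 1).re (Q 0 1 * (starRingEnd ℂ) (H 0 1)).re
    (Real.sqrt ((H 0 0).re ^ 2 + Complex.normSq (H 0 1))) h00 h11
    (by rw [Complex.sq_norm]; exact hdet) (Real.sqrt_nonneg _)
    (by rw [Real.sq_sqrt (add_nonneg (sq_nonneg _) (Complex.normSq_nonneg _))]
        rw [Complex.sq_norm])
    (by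
      calc (Q 0 1 * (starRingEnd ℂ) (H 0 1)).re
          ≤ ‖Q 0 1 * (starRingEnd ℂ) (H 0 1)‖ := Complex.re_le_norm _
        _ = ‖Q 0 1‖ * ‖H 0 1‖ := by
            rw [norm_mul, Complex.norm_conj])
  linarith

lemma psd2_facts {Q : Matrix (Fin 2) (Fin 2) ℂ} (hQ : Q.PosSemidef) :
    0 ≤ (Q 0 0).re ∧ 0 ≤ (Q 1 1).re ∧
      Complex.normSq (Q 0 1) ≤ (Q 0 0).re * (Q 1 1).re := by
  obtain ⟨B, rfl⟩ := psd_eq_BHB hQ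
  have happ : ∀ i j : Fin 2, (Bᴴ * B) i j = ∑ t, (starRingEnd ℂ) (B t i) * B t j := by
    intro i j
    rw [Matrix.mul_apply]
    simp [Matrix.conjTranspose_apply]
  have hdiag : ∀ i : Fin 2, ((Bᴴ * B) i i).re = ∑ t, Complex.normSq (B t i) := by
    intro i
    rw [happ]
    rw [← Complex.ofReal_re (∑ t, Complex.normSq (B t i))]
    congr 1
    push_cast
    exact Finset.sum_congr rfl fun t _ => (Complex.normSq_eq_conj_mul_self).symm
  refine ⟨by rw [hdiag]; exact Finset.sum_nonneg fun t _ => Complex.normSq_nonneg _,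
    by rw [hdiag]; exact Finset.sum_nonneg fun t _ => Complex.normSq_nonneg _, ?_⟩
  rw [hdiag, hdiag, happ]
  have h1 : ‖∑ t, (starRingEnd ℂ) (B t 0) * B t 1‖
      ≤ ∑ t, ‖B t 0‖ * ‖B t 1‖ := by
    refine le_trans (norm_sum_le _ _) ?_
    refine Finset.sum_le_sum fun t _ => ?_
    rw [norm_mul, Complex.norm_conj]
  have h2 : (∑ t, ‖B t 0‖ * ‖B t 1‖) ^ 2
      ≤ (∑ t, ‖B t 0‖ ^ 2) * (∑ t, ‖B t 1‖ ^ 2) :=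
    Finset.sum_mul_sq_le_sq_mul_sq _ _ _
  calc Complex.normSq (∑ t, (starRingEnd ℂ) (B t 0) * B t 1)
      = ‖∑ t, (starRingEnd ℂ) (B t 0) * B t 1‖ ^ 2 := (Complex.sq_norm _).symm
    _ ≤ (∑ t, ‖B t 0‖ * ‖B t 1‖) ^ 2 := by
        have := norm_nonneg (∑ t, (starRingEnd ℂ) (B t 0) * B t 1)
        nlinarith
    _ ≤ (∑ t, ‖B t 0‖ ^ 2) * (∑ t, ‖B t 1‖ ^ 2) := h2
    _ = (∑ t, Complex.normSq (B t 0)) * (∑ t, Complex.normSq (B t 1)) := by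
        simp [Complex.sq_norm]

lemma trace_conjTranspose_mul {Y : Type*} [Fintype Y] (Q A : Matrix Y Y ℂ) :
    (Qᴴ * A).trace = ∑ y, ∑ y', star (Q y' y) * A y' y := by
  rw [Matrix.trace]
  simp [Matrix.diag_apply, Matrix.mul_apply, Matrix.conjTranspose_apply]

lemma tensor_trace_reduce {X Z : Type*} [Fintype X] [Fintype Z]
    (Ψ : Matrix X X ℂ →ₗ[ℂ] Matrix (Fin 2) (Fin 2) ℂ)
    (ρ : Matrix (X × Z) (X × Z) ℂ)
    (Q : Matrix (Fin 2) (Fin 2) ℂ) (R : Matrix Z Z ℂ) (hR : R.IsHermitian) :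
    ((Q ⊗ₖ R)ᴴ * tensorId (⇑Ψ) ρ).trace
      = (Qᴴ * Ψ (Matrix.of fun x x' => ∑ z, ∑ z', R z z' * ρ (x, z') (x', z))).trace := by
  have hσ : (Matrix.of fun x x' => ∑ z, ∑ z', R z z' * ρ (x, z') (x', z))
      = ∑ z : Z, ∑ z' : Z, R z z' • (Matrix.of fun x x' => ρ (x, z') (x', z)) := by
    ext x x'
    simp [Matrix.sum_apply]
  rw [hσ, map_sum]
  simp_rw [map_sum, _root_.map_smul]
  rw [Matrix.mul_sum, Matrix.trace_sum]
  simp_rw [Matrix.mul_sum, Matrix.trace_sum, Matrix.mul_smul, Matrix.trace_smul, smul_eq_mul]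
  simp_rw [trace_conjTranspose_mul]
  -- expand LHS
  simp only [Matrix.kroneckerMap_apply, tensorId, Matrix.of_apply, star_mul']
  rw [Fintype.sum_prod_type]
  simp_rw [Fintype.sum_prod_type]
  -- reorder sums
  calc ∑ y : Fin 2, ∑ z : Z, ∑ y' : Fin 2, ∑ z' : Z,
        star (Q y' y) * star (R z' z) * Ψ (Matrix.of fun x x' => ρ (x, z') (x', z)) y' y
      = ∑ y : Fin 2, ∑ z : Z, ∑ z' : Z, ∑ y' : Fin 2,
        star (Q y' y) * star (R z' z) * Ψ (Matrix.of fun x x' => ρ (x, z') (x', z)) y' y :=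
        Finset.sum_congr rfl fun y _ => Finset.sum_congr rfl fun z _ => Finset.sum_comm
    _ = ∑ z : Z, ∑ y : Fin 2, ∑ z' : Z, ∑ y' : Fin 2,
        star (Q y' y) * star (R z' z) * Ψ (Matrix.of fun x x' => ρ (x, z') (x', z)) y' y :=
        Finset.sum_comm
    _ = ∑ z : Z, ∑ z' : Z, ∑ y : Fin 2, ∑ y' : Fin 2,
        star (Q y' y) * star (R z' z) * Ψ (Matrix.of fun x x' => ρ (x, z') (x', z)) y' y :=
        Finset.sum_congr rfl fun z _ => Finset.sum_comm
    _ = ∑ z : Z, ∑ z' : Z, R z z' * ∑ y : Fin 2, ∑ y' : Fin 2,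
        star (Q y' y) * Ψ (Matrix.of fun x x' => ρ (x, z') (x', z)) y' y := by
        refine Finset.sum_congr rfl fun z _ => Finset.sum_congr rfl fun z' _ => ?_
        rw [Finset.mul_sum]
        refine Finset.sum_congr rfl fun y _ => ?_
        rw [Finset.mul_sum]
        refine Finset.sum_congr rfl fun y' _ => ?_
        rw [← hR.apply z z']
        ring

set_option maxHeartbeats 1000000 in
lemma sigma_psd {X Z : Type*} [Fintype X] [Fintype Z] [DecidableEq X]
    (ρ : Matrix (X × Z) (X × Z) ℂ) (hρ : ρ.PosSemidef) (R : Matrix Z Z ℂ) (hR : R.PosSemidef) :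
    (Matrix.of fun x x' => ∑ z, ∑ z', R z z' * ρ (x, z') (x', z) : Matrix X X ℂ).PosSemidef := by
  obtain ⟨B, hB⟩ := psd_eq_BHB hR
  set C : Z → Matrix X (X × Z) ℂ :=
    fun t => Matrix.of (fun x p => (if x = p.1 then 1 else 0) * B t p.2) with hC
  have hrep : (Matrix.of fun x x' => ∑ z, ∑ z', R z z' * ρ (x, z') (x', z) : Matrix X X ℂ)
      = ∑ t, C t * ρ * (C t)ᴴ := by
    ext x x'
    have hsi : ∀ (c : Prop) [Decidable c] (a : ℂ),
        star (if c then a else (0:ℂ)) = if c then star a else 0 := by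
      intros c _ a; split <;> simp
    simp only [Matrix.sum_apply, Matrix.mul_apply, Matrix.conjTranspose_apply, hC,
      Matrix.of_apply, Fintype.sum_prod_type, star_mul', star_star, ite_mul, one_mul, zero_mul,
      Finset.mem_univ, if_true, star_one, star_zero, mul_ite, mul_zero,
      mul_one, hsi, Finset.sum_ite_irrel, Finset.sum_const_zero, Finset.sum_ite_eq,
      Finset.sum_mul, Finset.mul_sum]
    rw [hB]
    simp only [Matrix.mul_apply, Matrix.conjTranspose_apply, Finset.sum_mul]
    conv_rhs => rw [Finset.sum_comm]
    refine Finset.sum_congr rfl fun z _ => ?_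
    conv_rhs => rw [Finset.sum_comm]
    refine Finset.sum_congr rfl fun z' _ => ?_
    refine Finset.sum_congr rfl fun t _ => ?_
    ring
  rw [hrep]
  apply Finset.sum_induction _ _ (fun A B hA hB => hA.add hB) Matrix.PosSemidef.zero
  exact fun t _ => hρ.mul_mul_conjTranspose_same (C t)

lemma adj_trick (Q H : Matrix (Fin 2) (Fin 2) ℂ) (hH0 : H.trace = 0) :
    (((Q.trace • (1 : Matrix (Fin 2) (Fin 2) ℂ) - Q)ᴴ) * H).trace = -((Qᴴ * H).trace) := by
  rw [Matrix.conjTranspose_sub, Matrix.conjTranspose_smul, Matrix.conjTranspose_one,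
    Matrix.sub_mul, Matrix.trace_sub, Matrix.smul_mul, Matrix.one_mul, Matrix.trace_smul,
    hH0, smul_zero, zero_sub]

lemma adj_facts {Q : Matrix (Fin 2) (Fin 2) ℂ} (hQ : Q.IsHermitian) :
    (Q.trace • (1 : Matrix (Fin 2) (Fin 2) ℂ) - Q).IsHermitian
    ∧ (Q.trace • (1 : Matrix (Fin 2) (Fin 2) ℂ) - Q) 0 0 = Q 1 1
    ∧ (Q.trace • (1 : Matrix (Fin 2) (Fin 2) ℂ) - Q) 1 1 = Q 0 0
    ∧ (Q.trace • (1 : Matrix (Fin 2) (Fin 2) ℂ) - Q) 0 1 = -(Q 0 1)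
    ∧ (Q.trace • (1 : Matrix (Fin 2) (Fin 2) ℂ) - Q).trace = Q.trace := by
  refine ⟨?_, ?_, ?_, ?_, ?_⟩
  · rw [Matrix.IsHermitian, Matrix.conjTranspose_sub, Matrix.conjTranspose_smul,
      Matrix.conjTranspose_one, hQ.eq, trace_real' hQ, Complex.star_def, Complex.conj_ofReal]
  · simp [Matrix.sub_apply, Matrix.smul_apply, Matrix.one_apply, trace_fin2]
  · simp [Matrix.sub_apply, Matrix.smul_apply, Matrix.one_apply, trace_fin2]
  · simp [Matrix.sub_apply, Matrix.smul_apply, Matrix.one_apply]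
  · rw [Matrix.trace_sub, Matrix.trace_smul, Matrix.trace_one, smul_eq_mul]
    simp [Fintype.card_fin]
    ring

lemma term_bound {X : Type*} [Fintype X] [DecidableEq X]
    (Φ₀ Φ₁ : Matrix X X ℂ →ₗ[ℂ] Matrix (Fin 2) (Fin 2) ℂ)
    (hΦ₀ : IsChannel Φ₀) (hΦ₁ : IsChannel Φ₁)
    (c : ℝ) (hc : ∀ σ : Matrix X X ℂ, IsDensity σ → traceNorm (Φ₀ σ - Φ₁ σ) ≤ c)
    (σ : Matrix X X ℂ) (hσ : σ.PosSemidef)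
    (Q : Matrix (Fin 2) (Fin 2) ℂ) (hQh : Q.IsHermitian)
    (h00 : 0 ≤ (Q 0 0).re) (h11 : 0 ≤ (Q 1 1).re)
    (hdet : Complex.normSq (Q 0 1) ≤ (Q 0 0).re * (Q 1 1).re) :
    ((Qᴴ * (Φ₀ σ - Φ₁ σ)).trace).re ≤ c / 2 * ((Q.trace).re * (σ.trace).re) := by
  have hHh : (Φ₀ σ - Φ₁ σ).IsHermitian := by
    have e0 : (Φ₀ σ)ᴴ = Φ₀ σ := by rw [conjTranspose_map_choi Φ₀ hΦ₀.2.1 σ, hσ.1.eq]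
    have e1 : (Φ₁ σ)ᴴ = Φ₁ σ := by rw [conjTranspose_map_choi Φ₁ hΦ₁.2.1 σ, hσ.1.eq]
    rw [Matrix.IsHermitian, Matrix.conjTranspose_sub, e0, e1]
  have hH0 : (Φ₀ σ - Φ₁ σ).trace = 0 := by
    rw [Matrix.trace_sub, hΦ₀.1 σ, hΦ₁.1 σ, sub_self]
  have hQtr : 0 ≤ (Q.trace).re := by
    rw [trace_fin2]
    simp only [Complex.add_re]
    linarith
  have ht0 : 0 ≤ (σ.trace).re := psd_trace_re_nonneg hσ
  have hbound : traceNorm (Φ₀ σ - Φ₁ σ) ≤ c * (σ.trace).re := by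
    rcases eq_or_lt_of_le ht0 with h | h
    · have hσ0 : σ = 0 := psd_eq_zero_of_trace hσ h.symm
      have hz : traceNorm (0 : Matrix (Fin 2) (Fin 2) ℂ) = 0 := by
        rw [traceNorm_qubit 0 (by simp [Matrix.IsHermitian]) (by simp)]
        simp
      rw [hσ0]
      simp [hz]
    · set t := (σ.trace).re with htdef
      have htne : t ≠ 0 := ne_of_gt h
      set σ' : Matrix X X ℂ := ((t⁻¹ : ℝ) : ℂ) • σ with hσ'
      have hσ'psd : σ'.PosSemidef := by
        constructor
        · rw [hσ', Matrix.IsHermitian, Matrix.conjTranspose_smul, hσ.1.eq,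
            Complex.star_def, Complex.conj_ofReal]
        · exact (hσ.smul (a := ((t⁻¹ : ℝ) : ℂ)) (Complex.zero_le_real.mpr (by positivity))).2
      have hσ'tr : σ'.trace = 1 := by
        rw [hσ', Matrix.trace_smul, trace_real' hσ.1, smul_eq_mul, ← htdef]
        norm_cast
        exact inv_mul_cancel₀ htne
      have hcs := hc σ' ⟨hσ'psd, hσ'tr⟩
      have hmap : Φ₀ σ' - Φ₁ σ' = ((t⁻¹ : ℝ) : ℂ) • (Φ₀ σ - Φ₁ σ) := by
        rw [hσ', _root_.map_smul, _root_.map_smul, smul_sub]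
      rw [hmap] at hcs
      have hHh' : (((t⁻¹ : ℝ) : ℂ) • (Φ₀ σ - Φ₁ σ)).IsHermitian := by
        rw [Matrix.IsHermitian, Matrix.conjTranspose_smul, hHh.eq,
          Complex.star_def, Complex.conj_ofReal]
      have hH0' : (((t⁻¹ : ℝ) : ℂ) • (Φ₀ σ - Φ₁ σ)).trace = 0 := by
        rw [Matrix.trace_smul, hH0, smul_zero]
      rw [traceNorm_qubit _ hHh' hH0'] at hcs
      rw [traceNorm_qubit _ hHh hH0]
      set a := ((Φ₀ σ - Φ₁ σ) 0 0).re with hadef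
      set nn := Complex.normSq ((Φ₀ σ - Φ₁ σ) 0 1) with hnndef
      have e1 : ((((t⁻¹:ℝ):ℂ) • (Φ₀ σ - Φ₁ σ)) 0 0).re = t⁻¹ * a := by
        rw [Matrix.smul_apply, smul_eq_mul, Complex.mul_re]
        simp [Complex.ofReal_re, Complex.ofReal_im, hadef]
      have e2 : Complex.normSq ((((t⁻¹:ℝ):ℂ) • (Φ₀ σ - Φ₁ σ)) 0 1) = t⁻¹^2 * nn := by
        rw [Matrix.smul_apply, smul_eq_mul, Complex.normSq_mul, Complex.normSq_ofReal, hnndef]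
        ring
      rw [e1, e2] at hcs
      have e3 : Real.sqrt ((t⁻¹*a)^2 + t⁻¹^2*nn) = t⁻¹ * Real.sqrt (a^2+nn) := by
        rw [show (t⁻¹*a)^2 + t⁻¹^2*nn = t⁻¹^2 * (a^2+nn) by ring]
        rw [Real.sqrt_mul (sq_nonneg _), Real.sqrt_sq (by positivity)]
      rw [e3] at hcs
      have hfin := mul_le_mul_of_nonneg_left hcs (le_of_lt h)
      calc 2 * Real.sqrt (a^2+nn) = t * (2*(t⁻¹*Real.sqrt (a^2+nn))) := by
            field_simp
        _ ≤ t * c := hfin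
        _ = c * t := mul_comm _ _
  calc ((Qᴴ * (Φ₀ σ - Φ₁ σ)).trace).re
      ≤ (Q.trace).re / 2 * traceNorm (Φ₀ σ - Φ₁ σ) := core_bound Q _ hQh h00 h11 hdet hHh hH0
    _ ≤ (Q.trace).re / 2 * (c * (σ.trace).re) := by
        apply mul_le_mul_of_nonneg_left hbound (by linarith)
    _ = c / 2 * ((Q.trace).re * (σ.trace).re) := by ring

end Aux

/-- for channels with one-qubit output, separable measurements do no better
than strategies without entanglement: `‖Φ₀ - Φ₁‖_SEP = ‖Φ₀ - Φ₁‖_NE` when `dim Y = 2`. -/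
theorem sep_eq_ne_for_qubit_output
    {X : Type*} [Fintype X] [DecidableEq X]
    (Φ₀ Φ₁ : Matrix X X ℂ →ₗ[ℂ] Matrix (Fin 2) (Fin 2) ℂ)
    (hΦ₀ : IsChannel Φ₀) (hΦ₁ : IsChannel Φ₁)
    (c : ℝ) (hc : ∀ σ : Matrix X X ℂ, IsDensity σ → traceNorm (Φ₀ σ - Φ₁ σ) ≤ c)
    (Z : Type*) [Fintype Z] [DecidableEq Z]
    (ρ : Matrix (X × Z) (X × Z) ℂ) (hρ : IsDensity ρ)
    (P₀ P₁ : Matrix (Fin 2 × Z) (Fin 2 × Z) ℂ)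
    (hP₀sep : SeparableOp P₀) (hP₁sep : SeparableOp P₁)
    (hP₀ : P₀.PosSemidef) (hP₁ : P₁.PosSemidef)
    (hmeas : P₀ + P₁ = 1) :
    (((P₀ - P₁)ᴴ * tensorId (fun M => Φ₀ M - Φ₁ M) ρ).trace).re ≤ c := by
  classical
  obtain ⟨N, Q, R, hQp, hRp, hP0⟩ := hP₀sep
  obtain ⟨N', Q', R', hQ'p, hR'p, hP1⟩ := hP₁sep
  have hfun : (fun M => Φ₀ M - Φ₁ M) = ⇑(Φ₀ - Φ₁) := by
    funext M; simp [LinearMap.sub_apply]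
  rw [hfun]
  have hΨapp : ∀ M : Matrix X X ℂ, (Φ₀ - Φ₁) M = Φ₀ M - Φ₁ M :=
    fun M => LinearMap.sub_apply _ _ _
  have hΨtr : ∀ M : Matrix X X ℂ, ((Φ₀ - Φ₁) M).trace = 0 := by
    intro M
    rw [hΨapp, Matrix.trace_sub, hΦ₀.1 M, hΦ₁.1 M, sub_self]
  -- split the trace
  have hsplit : ((P₀ - P₁)ᴴ * tensorId (⇑(Φ₀ - Φ₁)) ρ).trace
      = (P₀ᴴ * tensorId (⇑(Φ₀ - Φ₁)) ρ).trace - (P₁ᴴ * tensorId (⇑(Φ₀ - Φ₁)) ρ).trace := by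
    rw [Matrix.conjTranspose_sub, Matrix.sub_mul, Matrix.trace_sub]
  have hsum0 : (P₀ᴴ * tensorId (⇑(Φ₀ - Φ₁)) ρ).trace
      = ∑ i, ((Q i)ᴴ * (Φ₀ - Φ₁) (Matrix.of fun x x' =>
          ∑ z, ∑ z', R i z z' * ρ (x, z') (x', z))).trace := by
    rw [hP0, Matrix.conjTranspose_sum, Finset.sum_mul, Matrix.trace_sum]
    exact Finset.sum_congr rfl fun i _ => tensor_trace_reduce (Φ₀ - Φ₁) ρ (Q i) (R i) (hRp i).1
  have hsum1 : (P₁ᴴ * tensorId (⇑(Φ₀ - Φ₁)) ρ).trace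
      = ∑ j, ((Q' j)ᴴ * (Φ₀ - Φ₁) (Matrix.of fun x x' =>
          ∑ z, ∑ z', R' j z z' * ρ (x, z') (x', z))).trace := by
    rw [hP1, Matrix.conjTranspose_sum, Finset.sum_mul, Matrix.trace_sum]
    exact Finset.sum_congr rfl fun j _ => tensor_trace_reduce (Φ₀ - Φ₁) ρ (Q' j) (R' j) (hR'p j).1
  -- rewrite the value as a sum of "good" terms
  have hre : (((P₀ - P₁)ᴴ * tensorId (⇑(Φ₀ - Φ₁)) ρ).trace).re
      = (∑ i, (((Q i)ᴴ * (Φ₀ - Φ₁) (Matrix.of fun x x' =>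
            ∑ z, ∑ z', R i z z' * ρ (x, z') (x', z))).trace).re)
        + ∑ j, ((((Q' j).trace • (1 : Matrix (Fin 2) (Fin 2) ℂ) - Q' j)ᴴ
            * (Φ₀ - Φ₁) (Matrix.of fun x x' =>
            ∑ z, ∑ z', R' j z z' * ρ (x, z') (x', z))).trace).re := by
    rw [hsplit, hsum0, hsum1, Complex.sub_re, Complex.re_sum, Complex.re_sum,
      sub_eq_add_neg, ← Finset.sum_neg_distrib]
    congr 1
    refine Finset.sum_congr rfl fun j _ => ?_
    rw [adj_trick (Q' j) _ (hΨtr _), Complex.neg_re]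
  -- per-term bounds
  have hbnd0 : ∀ i, (((Q i)ᴴ * (Φ₀ - Φ₁) (Matrix.of fun x x' =>
        ∑ z, ∑ z', R i z z' * ρ (x, z') (x', z))).trace).re
      ≤ c / 2 * (((Q i).trace).re
          * ((Matrix.of fun x x' => ∑ z, ∑ z', R i z z' * ρ (x, z') (x', z)
              : Matrix X X ℂ).trace).re) := by
    intro i
    obtain ⟨ha, hb, hd⟩ := psd2_facts (hQp i)
    rw [hΨapp]
    exact term_bound Φ₀ Φ₁ hΦ₀ hΦ₁ c hc _ (sigma_psd ρ hρ.1 _ (hRp i)) _ (hQp i).1 ha hb hd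
  have hbnd1 : ∀ j, ((((Q' j).trace • (1 : Matrix (Fin 2) (Fin 2) ℂ) - Q' j)ᴴ
        * (Φ₀ - Φ₁) (Matrix.of fun x x' =>
        ∑ z, ∑ z', R' j z z' * ρ (x, z') (x', z))).trace).re
      ≤ c / 2 * (((Q' j).trace).re
          * ((Matrix.of fun x x' => ∑ z, ∑ z', R' j z z' * ρ (x, z') (x', z)
              : Matrix X X ℂ).trace).re) := by
    intro j
    obtain ⟨hherm, e00, e11, e01, etr⟩ := adj_facts (hQ'p j).1
    obtain ⟨ha, hb, hd⟩ := psd2_facts (hQ'p j)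
    have hb' := term_bound Φ₀ Φ₁ hΦ₀ hΦ₁ c hc _ (sigma_psd ρ hρ.1 _ (hR'p j))
      ((Q' j).trace • (1 : Matrix (Fin 2) (Fin 2) ℂ) - Q' j) hherm
      (by rw [e00]; exact hb) (by rw [e11]; exact ha)
      (by rw [e01, e00, e11, Complex.normSq_neg, mul_comm]; exact hd)
    rw [etr] at hb'
    rw [hΨapp]
    exact hb'
  -- the sum identity
  have hptr : ∀ z z' : Z, ((∑ i, (Q i).trace * R i z z') + (∑ j, (Q' j).trace * R' j z z'))
      = if z = z' then 2 else 0 := by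
    intro z z'
    have h0 := congrFun (congrFun hmeas ((0 : Fin 2), z)) ((0 : Fin 2), z')
    have h1 := congrFun (congrFun hmeas ((1 : Fin 2), z)) ((1 : Fin 2), z')
    rw [hP0, hP1] at h0 h1
    simp only [Matrix.add_apply, Matrix.sum_apply, Matrix.kroneckerMap_apply,
      Matrix.one_apply, Prod.mk.injEq, true_and] at h0 h1
    simp_rw [trace_fin2, add_mul, Finset.sum_add_distrib]
    split_ifs with hzz
    · subst hzz
      simp only [if_true] at h0 h1
      linear_combination h0 + h1
    · simp only [hzz, if_false] at h0 h1
      linear_combination h0 + h1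
  have hσtr : ∀ Rm : Matrix Z Z ℂ,
      ((Matrix.of fun x x' => ∑ z, ∑ z', Rm z z' * ρ (x, z') (x', z) : Matrix X X ℂ)).trace
      = ∑ z, ∑ z', Rm z z' * (∑ x, ρ (x, z') (x, z)) := by
    intro Rm
    rw [Matrix.trace]
    simp only [Matrix.diag_apply, Matrix.of_apply]
    rw [Finset.sum_comm]
    refine Finset.sum_congr rfl fun z _ => ?_
    rw [Finset.sum_comm]
    refine Finset.sum_congr rfl fun z' _ => ?_
    rw [Finset.mul_sum]
  have hpull : ∀ {n : ℕ} (QQ : Fin n → Matrix (Fin 2) (Fin 2) ℂ)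
      (RR : Fin n → Matrix Z Z ℂ),
      (∑ i, (QQ i).trace * ∑ z, ∑ z', RR i z z' * (∑ x, ρ (x, z') (x, z)))
        = ∑ z, ∑ z', (∑ i, (QQ i).trace * RR i z z') * (∑ x, ρ (x, z') (x, z)) := by
    intro n QQ RR
    calc (∑ i, (QQ i).trace * ∑ z, ∑ z', RR i z z' * (∑ x, ρ (x, z') (x, z)))
        = ∑ i, ∑ z, ∑ z', (QQ i).trace * (RR i z z' * (∑ x, ρ (x, z') (x, z))) := by
          refine Finset.sum_congr rfl fun i _ => ?_
          rw [Finset.mul_sum]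
          exact Finset.sum_congr rfl fun z _ => by rw [Finset.mul_sum]
      _ = ∑ z, ∑ i, ∑ z', (QQ i).trace * (RR i z z' * (∑ x, ρ (x, z') (x, z))) :=
          Finset.sum_comm
      _ = ∑ z, ∑ z', ∑ i, (QQ i).trace * (RR i z z' * (∑ x, ρ (x, z') (x, z))) :=
          Finset.sum_congr rfl fun z _ => Finset.sum_comm
      _ = ∑ z, ∑ z', (∑ i, (QQ i).trace * RR i z z') * (∑ x, ρ (x, z') (x, z)) := by
          refine Finset.sum_congr rfl fun z _ => Finset.sum_congr rfl fun z' _ => ?_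
          rw [Finset.sum_mul]
          exact Finset.sum_congr rfl fun i _ => (mul_assoc _ _ _).symm
  have htotal : ((∑ i, (Q i).trace * ((Matrix.of fun x x' =>
        ∑ z, ∑ z', R i z z' * ρ (x, z') (x', z) : Matrix X X ℂ)).trace)
      + (∑ j, (Q' j).trace * ((Matrix.of fun x x' =>
        ∑ z, ∑ z', R' j z z' * ρ (x, z') (x', z) : Matrix X X ℂ)).trace)) = 2 := by
    simp_rw [hσtr]
    rw [hpull Q R, hpull Q' R', ← Finset.sum_add_distrib]
    have hcomb : ∀ z : Z,
        ((∑ z' : Z, (∑ i, (Q i).trace * R i z z') * (∑ x, ρ (x, z') (x, z)))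
          + ∑ z' : Z, (∑ j, (Q' j).trace * R' j z z') * (∑ x, ρ (x, z') (x, z)))
        = 2 * ∑ x, ρ (x, z) (x, z) := by
      intro z
      rw [← Finset.sum_add_distrib]
      have hterm : ∀ z' : Z, ((∑ i, (Q i).trace * R i z z') * (∑ x, ρ (x, z') (x, z))
          + (∑ j, (Q' j).trace * R' j z z') * (∑ x, ρ (x, z') (x, z)))
          = (if z = z' then 2 else 0) * (∑ x, ρ (x, z') (x, z)) := by
        intro z'
        rw [← add_mul, hptr z z']
      simp_rw [hterm]
      simp [Finset.sum_ite_eq, ite_mul]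
    refine Finset.sum_congr rfl (fun z _ => hcomb z) |>.trans ?_
    rw [← Finset.mul_sum]
    have hρ1 : (∑ z : Z, ∑ x : X, ρ (x, z) (x, z)) = 1 := by
      rw [← hρ.2, Matrix.trace]
      simp only [Matrix.diag_apply]
      rw [Fintype.sum_prod_type]
      exact Finset.sum_comm
    rw [hρ1, mul_one]
  -- cast the identity to the reals
  have hreal0 : ∀ i, (Q i).trace * ((Matrix.of fun x x' =>
      ∑ z, ∑ z', R i z z' * ρ (x, z') (x', z) : Matrix X X ℂ)).trace
      = ((((Q i).trace).re * ((Matrix.of fun x x' =>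
          ∑ z, ∑ z', R i z z' * ρ (x, z') (x', z) : Matrix X X ℂ)).trace.re : ℝ) : ℂ) := by
    intro i
    conv_lhs => rw [trace_real' (hQp i).1, trace_real' (sigma_psd ρ hρ.1 _ (hRp i)).1]
    push_cast
    ring
  have hreal1 : ∀ j, (Q' j).trace * ((Matrix.of fun x x' =>
      ∑ z, ∑ z', R' j z z' * ρ (x, z') (x', z) : Matrix X X ℂ)).trace
      = ((((Q' j).trace).re * ((Matrix.of fun x x' =>
          ∑ z, ∑ z', R' j z z' * ρ (x, z') (x', z) : Matrix X X ℂ)).trace.re : ℝ) : ℂ) := by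
    intro j
    conv_lhs => rw [trace_real' (hQ'p j).1, trace_real' (sigma_psd ρ hρ.1 _ (hR'p j)).1]
    push_cast
    ring
  have htotalR : ((∑ i, ((Q i).trace).re * ((Matrix.of fun x x' =>
        ∑ z, ∑ z', R i z z' * ρ (x, z') (x', z) : Matrix X X ℂ)).trace.re)
      + (∑ j, ((Q' j).trace).re * ((Matrix.of fun x x' =>
        ∑ z, ∑ z', R' j z z' * ρ (x, z') (x', z) : Matrix X X ℂ)).trace.re)) = 2 := by
    have h2 := htotal
    simp_rw [hreal0, hreal1] at h2
    rw [← Complex.ofReal_sum, ← Complex.ofReal_sum, ← Complex.ofReal_add] at h2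
    exact_mod_cast h2
  -- final assembly
  rw [hre]
  calc (∑ i, (((Q i)ᴴ * (Φ₀ - Φ₁) (Matrix.of fun x x' =>
            ∑ z, ∑ z', R i z z' * ρ (x, z') (x', z))).trace).re)
        + ∑ j, ((((Q' j).trace • (1 : Matrix (Fin 2) (Fin 2) ℂ) - Q' j)ᴴ
            * (Φ₀ - Φ₁) (Matrix.of fun x x' =>
            ∑ z, ∑ z', R' j z z' * ρ (x, z') (x', z))).trace).re
      ≤ (∑ i, c / 2 * (((Q i).trace).re * ((Matrix.of fun x x' =>
            ∑ z, ∑ z', R i z z' * ρ (x, z') (x', z) : Matrix X X ℂ)).trace.re))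
        + ∑ j, c / 2 * (((Q' j).trace).re * ((Matrix.of fun x x' =>
            ∑ z, ∑ z', R' j z z' * ρ (x, z') (x', z) : Matrix X X ℂ)).trace.re) :=
        add_le_add (Finset.sum_le_sum fun i _ => hbnd0 i)
          (Finset.sum_le_sum fun j _ => hbnd1 j)
    _ = c / 2 * ((∑ i, ((Q i).trace).re * ((Matrix.of fun x x' =>
            ∑ z, ∑ z', R i z z' * ρ (x, z') (x', z) : Matrix X X ℂ)).trace.re)
        + (∑ j, ((Q' j).trace).re * ((Matrix.of fun x x' =>
            ∑ z, ∑ z', R' j z z' * ρ (x, z') (x', z) : Matrix X X ℂ)).trace.re)) := by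
        rw [mul_add, Finset.mul_sum, Finset.mul_sum]
    _ = c / 2 * 2 := by rw [htotalR]
    _ = c := by ring
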